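/- arXiv:2602.20109 — 6 statements merged into one kernel-verified Lean document; each statement's English description precedes it below -/
import Mathlib

section
/- Let p ≥ 5 be a prime and let X₁, X₂ ∈ 𝔽_p[x₄,x₆] be homogeneous (for the weighted grading) of weighted degrees d₁ and d₂ with d₁ ≡ −1 (mod p) and d₂ ≡ 1 (mod p). If R(X₂ − x₂·X₁) = 0 in 𝔽_p[x₂,x₄,x₆], then ∂X₁ = X₂ and ∂X₂ = −x₄·X₁. -/
open MvPolynomial

noncomputable section

/-- `sig k n = ∑_{d ∣ n} d^k`. -/
def sig (k n : ℕ) : ℕ := ∑ d ∈ n.divisors, d ^ k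

/-- The normalized Eisenstein series `E_ν` as a formal power series in `ℚ[[q]]`
(valid for even `ν ≥ 2`): `E_ν = 1 − (2ν/B_ν) ∑_{n ≥ 1} σ_{ν−1}(n) qⁿ`. -/
def Eis (ν : ℕ) : PowerSeries ℚ :=
  PowerSeries.mk fun n => if n = 0 then 1 else -(2 * (ν : ℚ) / bernoulli ν) * (sig (ν - 1) n : ℚ)

/-- Reduction modulo `p` of a rational number (the correct reduction whenever the
denominator is prime to `p`). -/
def rred (p : ℕ) [Fact p.Prime] (r : ℚ) : ZMod p :=
  (r.num : ZMod p) * (r.den : ZMod p)⁻¹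

/-- The Ramanujan vector field `R` on `S[x₂,x₄,x₆]` (variables `0 ↦ x₂`, `1 ↦ x₄`, `2 ↦ x₆`),
where `u` is the inverse of `6` in `S`:
`R = ((x₂² − x₄)/12)∂/∂x₂ + ((x₂x₄ − x₆)/3)∂/∂x₄ + ((x₂x₆ − x₄²)/2)∂/∂x₆`. -/
def Rvf {S : Type*} [CommRing S] (u : S) (f : MvPolynomial (Fin 3) S) :
    MvPolynomial (Fin 3) S :=
  C (3 * u * u) * (X 0 ^ 2 - X 1) * pderiv 0 f
    + C (2 * u) * (X 0 * X 1 - X 2) * pderiv 1 f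
    + C (3 * u) * (X 0 * X 2 - X 1 ^ 2) * pderiv 2 f

/-- The vector field `F = −12 ∂/∂x₂`. -/
def Fvf {S : Type*} [CommRing S] (f : MvPolynomial (Fin 3) S) : MvPolynomial (Fin 3) S :=
  (-12 : MvPolynomial (Fin 3) S) * pderiv 0 f

/-- The vector field `H = 2x₂ ∂/∂x₂ + 4x₄ ∂/∂x₄ + 6x₆ ∂/∂x₆`. -/
def Hvf {S : Type*} [CommRing S] (f : MvPolynomial (Fin 3) S) : MvPolynomial (Fin 3) S :=
  C 2 * X 0 * pderiv 0 f + C 4 * X 1 * pderiv 1 f + C 6 * X 2 * pderiv 2 f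

/-- The Ramanujan–Serre vector field `∂ = −4x₆ ∂/∂x₄ − 6x₄² ∂/∂x₆` on `S[x₄,x₆]`
(variables `0 ↦ x₄`, `1 ↦ x₆`). -/
def serreD {S : Type*} [CommRing S] (f : MvPolynomial (Fin 2) S) : MvPolynomial (Fin 2) S :=
  -(C 4 * X 1 * pderiv 0 f) - C 6 * X 0 ^ 2 * pderiv 1 f

/-- View a polynomial of `𝔽_p[x₄,x₆]` inside `k[x₂,x₄,x₆]`, for `k` a field of
characteristic `p` (via the inclusion `𝔽_p ⊆ k` and `x₄ ↦ x₄`, `x₆ ↦ x₆`). -/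
def lift3 (p : ℕ) (k : Type*) [Field k] [CharP k p] (Q : MvPolynomial (Fin 2) (ZMod p)) :
    MvPolynomial (Fin 3) k :=
  rename (![1, 2] : Fin 2 → Fin 3) (MvPolynomial.map (ZMod.castHom (dvd_refl p) k) Q)

/-- View a polynomial of `𝔽_p[x₄,x₆]` inside `k[x₄,x₆]`, for `k` a field of
characteristic `p`. -/
def lift2 (p : ℕ) (k : Type*) [Field k] [CharP k p] (Q : MvPolynomial (Fin 2) (ZMod p)) :
    MvPolynomial (Fin 2) k :=
  MvPolynomial.map (ZMod.castHom (dvd_refl p) k) Q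

abbrev f3 : Fin 2 → Fin 3 := ![1, 2]

lemma f3_inj : Function.Injective f3 := by decide

lemma pd0_rn {R : Type*} [CommRing R] (Q : MvPolynomial (Fin 2) R) :
    pderiv (0 : Fin 3) (rename f3 Q) = 0 := by
  apply pderiv_eq_zero_of_notMem_vars
  intro hmem
  obtain ⟨i, -, hi⟩ := Finset.mem_image.mp (vars_rename f3 Q hmem)
  fin_cases i <;> simp [f3] at hi

lemma pd1_rn {R : Type*} [CommRing R] (Q : MvPolynomial (Fin 2) R) :
    pderiv (1 : Fin 3) (rename f3 Q) = rename f3 (pderiv 0 Q) := by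
  have := pderiv_rename f3_inj 0 Q
  simpa [f3] using this

lemma pd2_rn {R : Type*} [CommRing R] (Q : MvPolynomial (Fin 2) R) :
    pderiv (2 : Fin 3) (rename f3 Q) = rename f3 (pderiv 1 Q) := by
  have := pderiv_rename f3_inj 1 Q
  simpa [f3] using this

lemma pderiv_ofNat {R : Type*} [CommRing R] {σ : Type*} (i : σ) (n : ℕ) [n.AtLeastTwo] :
    pderiv i (no_index (OfNat.ofNat n) : MvPolynomial σ R) = 0 := by
  rw [← map_ofNat (C : R →+* MvPolynomial σ R) n]; exact pderiv_C

lemma psi_X0 {R : Type*} [CommRing R] :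
    aeval (R := R) (![0, X 0, X 1] : Fin 3 → MvPolynomial (Fin 2) R) (X 0) = 0 := by simp

lemma psi_X1 {R : Type*} [CommRing R] :
    aeval (R := R) (![0, X 0, X 1] : Fin 3 → MvPolynomial (Fin 2) R) (X 1) = X 0 := by simp

lemma psi_X2 {R : Type*} [CommRing R] :
    aeval (R := R) (![0, X 0, X 1] : Fin 3 → MvPolynomial (Fin 2) R) (X 2) = X 1 := by simp

lemma psi_C {R : Type*} [CommRing R] (r : R) :
    aeval (![0, X 0, X 1] : Fin 3 → MvPolynomial (Fin 2) R) (C r) = C r := by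
  rw [aeval_C, algebraMap_eq]

lemma psi_rename {R : Type*} [CommRing R] (Q : MvPolynomial (Fin 2) R) :
    aeval (![0, X 0, X 1] : Fin 3 → MvPolynomial (Fin 2) R) (rename f3 Q) = Q := by
  rw [aeval_rename]
  have : ((![0, X 0, X 1] : Fin 3 → MvPolynomial (Fin 2) R) ∘ f3) = X := by
    funext i; fin_cases i <;> simp [f3]
  rw [this, aeval_X_left_apply]

lemma X_mul_pderiv_monomial {R : Type*} [CommRing R] (i : Fin 2) (v : Fin 2 →₀ ℕ) (c : R) :
    X i * pderiv i (monomial v c) = C ((v i : R)) * monomial v c := by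
  classical
  rw [pderiv_monomial]
  by_cases h : v i = 0
  · simp [h]
  · have hs : Finsupp.single i 1 + (v - Finsupp.single i 1) = v := by
      ext j
      rcases eq_or_ne j i with rfl | hj
      · simp [Finsupp.single_apply]
        omega
      · simp [Finsupp.single_apply, Ne.symm hj]
    rw [X, monomial_mul, hs, C_mul_monomial]
    congr 1
    ring

lemma euler {R : Type*} [CommRing R] (Q : MvPolynomial (Fin 2) R) (d : ℕ)
    (hQ : MvPolynomial.IsWeightedHomogeneous ![4, 6] Q d) :
    (4 : MvPolynomial (Fin 2) R) * (X 0 * pderiv 0 Q) + 6 * (X 1 * pderiv 1 Q)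
      = C ((d : R)) * Q := by
  conv_lhs => rw [Q.as_sum]
  conv_rhs => rw [Q.as_sum]
  rw [map_sum, map_sum, Finset.mul_sum, Finset.mul_sum, Finset.mul_sum, Finset.mul_sum,
    Finset.mul_sum, ← Finset.sum_add_distrib]
  refine Finset.sum_congr rfl fun v hv => ?_
  have hw : v 0 * 4 + v 1 * 6 = d := by
    have := hQ (mem_support_iff.mp hv)
    rw [Finsupp.weight_apply, Finsupp.sum_fintype _ _ (by simp)] at this
    simpa [Fin.sum_univ_two] using this
  rw [_root_.X_mul_pderiv_monomial, _root_.X_mul_pderiv_monomial]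
  have : ((d : R)) = 4 * (v 0 : R) + 6 * (v 1 : R) := by
    rw [← hw]; push_cast; ring
  rw [this, map_add, map_mul, map_mul]
  simp only [map_ofNat]
  ring


set_option maxHeartbeats 1000000 in
/-- if `R(X₂ − x₂X₁) = 0` for weighted-homogeneous `X₁, X₂ ∈ 𝔽_p[x₄,x₆]` of
degrees `≡ −1` and `≡ 1 (mod p)`, then `∂X₁ = X₂` and `∂X₂ = −x₄X₁`. -/
theorem stmt8 (p : ℕ) [Fact p.Prime] (hp5 : 5 ≤ p)
    (X₁ X₂ : MvPolynomial (Fin 2) (ZMod p)) (d₁ d₂ : ℕ)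
    (h1 : MvPolynomial.IsWeightedHomogeneous ![4, 6] X₁ d₁)
    (h2 : MvPolynomial.IsWeightedHomogeneous ![4, 6] X₂ d₂)
    (hd1 : (d₁ : ZMod p) = -1) (hd2 : (d₂ : ZMod p) = 1)
    (h : Rvf ((6 : ZMod p)⁻¹)
        (rename (![1, 2] : Fin 2 → Fin 3) X₂ - X 0 * rename (![1, 2] : Fin 2 → Fin 3) X₁)
      = 0) :
    serreD X₁ = X₂ ∧ serreD X₂ = -(X 0 * X₁) := by
  set u : ZMod p := (6 : ZMod p)⁻¹ with hu
  have h6 : (6 : ZMod p) ≠ 0 := by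
    intro h6
    rw [show ((6 : ZMod p)) = ((6 : ℕ) : ZMod p) by norm_num,
      ZMod.natCast_eq_zero_iff] at h6
    have hle : p ≤ 6 := Nat.le_of_dvd (by norm_num) h6
    interval_cases p
    · exact absurd h6 (by norm_num)
    · exact absurd (Fact.out : Nat.Prime 6) (by norm_num)
  have hC : (C u : MvPolynomial (Fin 2) (ZMod p)) * 6 = 1 := by
    rw [show ((6 : MvPolynomial (Fin 2) (ZMod p))) = C ((6 : ZMod p)) from (map_ofNat C 6).symm,
      ← C_mul, hu, inv_mul_cancel₀ h6, C_1]
  -- explicit form of h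
  have key0 : 3 * C u * C u * (X 0 ^ 2 - X 1) * (-(rename f3 X₁))
      + 2 * C u * (X 0 * X 1 - X 2) * (rename f3 (pderiv 0 X₂) - X 0 * rename f3 (pderiv 0 X₁))
      + 3 * C u * (X 0 * X 2 - X 1 ^ 2) * (rename f3 (pderiv 1 X₂) - X 0 * rename f3 (pderiv 1 X₁))
      = 0 := by
    rw [← h]
    simp only [Rvf, map_sub, pderiv_mul, pd0_rn, pd1_rn, pd2_rn,
      pderiv_X_self, pderiv_X_of_ne (show (0 : Fin 3) ≠ 1 by decide),
      pderiv_X_of_ne (show (0 : Fin 3) ≠ 2 by decide), C_mul, map_ofNat]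
    ring
  have key1 : 3 * C u * C u * ((2 * X 0) * (-(rename f3 X₁)))
      + 2 * C u * (X 1 * (rename f3 (pderiv 0 X₂) - X 0 * rename f3 (pderiv 0 X₁))
          + (X 0 * X 1 - X 2) * (-(rename f3 (pderiv 0 X₁))))
      + 3 * C u * (X 2 * (rename f3 (pderiv 1 X₂) - X 0 * rename f3 (pderiv 1 X₁))
          + (X 0 * X 2 - X 1 ^ 2) * (-(rename f3 (pderiv 1 X₁))))
      = 0 := by
    have h0 : pderiv (0 : Fin 3) (3 * C u * C u * (X 0 ^ 2 - X 1) * (-(rename f3 X₁))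
      + 2 * C u * (X 0 * X 1 - X 2) * (rename f3 (pderiv 0 X₂) - X 0 * rename f3 (pderiv 0 X₁))
      + 3 * C u * (X 0 * X 2 - X 1 ^ 2) * (rename f3 (pderiv 1 X₂) - X 0 * rename f3 (pderiv 1 X₁)))
        = 0 := by rw [key0, map_zero]
    rw [← h0]
    simp only [map_add, map_neg, map_sub, pderiv_mul, pderiv_pow, pderiv_C, pd0_rn,
      pderiv_ofNat, pderiv_X_self,
      pderiv_X_of_ne (show (0 : Fin 3) ≠ 1 by decide),
      pderiv_X_of_ne (show (0 : Fin 3) ≠ 2 by decide),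
      pderiv_X_of_ne (show (1 : Fin 3) ≠ 0 by decide),
      pderiv_X_of_ne (show (2 : Fin 3) ≠ 0 by decide),
      pderiv_X_of_ne (show (1 : Fin 3) ≠ 2 by decide),
      pderiv_X_of_ne (show (2 : Fin 3) ≠ 1 by decide), pderiv_one, map_ofNat]
    ring
  -- apply the substitution x₂ ↦ 0
  have eq0 : 3 * C u * C u * X 0 * X₁ - 2 * C u * (X 1 * pderiv 0 X₂)
      - 3 * C u * (X 0 ^ 2 * pderiv 1 X₂) = 0 := by
    have h0 : aeval (![0, X 0, X 1] : Fin 3 → MvPolynomial (Fin 2) (ZMod p))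
        (3 * C u * C u * (X 0 ^ 2 - X 1) * (-(rename f3 X₁))
      + 2 * C u * (X 0 * X 1 - X 2) * (rename f3 (pderiv 0 X₂) - X 0 * rename f3 (pderiv 0 X₁))
      + 3 * C u * (X 0 * X 2 - X 1 ^ 2) * (rename f3 (pderiv 1 X₂) - X 0 * rename f3 (pderiv 1 X₁)))
        = 0 := by rw [key0, map_zero]
    rw [← h0]
    simp only [map_add, map_sub, map_mul, map_neg, map_pow, map_ofNat, psi_rename,
      psi_X0, psi_X1, psi_X2, psi_C]
    ring
  have eq1 : 2 * C u * (X 0 * pderiv 0 X₂ + X 1 * pderiv 0 X₁)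
      + 3 * C u * (X 1 * pderiv 1 X₂ + X 0 ^ 2 * pderiv 1 X₁) = 0 := by
    have h0 : aeval (![0, X 0, X 1] : Fin 3 → MvPolynomial (Fin 2) (ZMod p))
        (3 * C u * C u * ((2 * X 0) * (-(rename f3 X₁)))
      + 2 * C u * (X 1 * (rename f3 (pderiv 0 X₂) - X 0 * rename f3 (pderiv 0 X₁))
          + (X 0 * X 1 - X 2) * (-(rename f3 (pderiv 0 X₁))))
      + 3 * C u * (X 2 * (rename f3 (pderiv 1 X₂) - X 0 * rename f3 (pderiv 1 X₁))
          + (X 0 * X 2 - X 1 ^ 2) * (-(rename f3 (pderiv 1 X₁)))))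
        = 0 := by rw [key1, map_zero]
    rw [← h0]
    simp only [map_add, map_sub, map_mul, map_neg, map_pow, map_ofNat, psi_rename,
      psi_X0, psi_X1, psi_X2, psi_C]
    ring
  have E : (4 : MvPolynomial (Fin 2) (ZMod p)) * (X 0 * pderiv 0 X₂) + 6 * (X 1 * pderiv 1 X₂)
      = X₂ := by
    rw [euler X₂ d₂ h2, hd2, C_1, one_mul]
  constructor
  · show -(C 4 * X 1 * pderiv 0 X₁) - C 6 * X 0 ^ 2 * pderiv 1 X₁ = X₂
    simp only [map_ofNat]
    linear_combination (-12 : MvPolynomial (Fin 2) (ZMod p)) * eq1 + E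
      + (4 * X 1 * pderiv 0 X₁ + 6 * X 0 ^ 2 * pderiv 1 X₁
        + 4 * X 0 * pderiv 0 X₂ + 6 * X 1 * pderiv 1 X₂) * hC
  · show -(C 4 * X 1 * pderiv 0 X₂) - C 6 * X 0 ^ 2 * pderiv 1 X₂ = -(X 0 * X₁)
    simp only [map_ofNat]
    linear_combination (12 : MvPolynomial (Fin 2) (ZMod p)) * eq0
      + (-(X 0 * X₁) * (1 + 6 * C u) + 4 * X 1 * pderiv 0 X₂ + 6 * X 0 ^ 2 * pderiv 1 X₂) * hC
end
end

section
/- Let p ≥ 5 be a prime and let X₁, X₂ ∈ 𝔽_p[x₄,x₆] be homogeneous (for the weighted grading) of weighted degrees d₁ and d₂ with d₁ ≡ −1 (mod p) and d₂ ≡ 1 (mod p). If ∂X₁ = X₂ and ∂X₂ = −x₄·X₁, then R(X₂ − x₂·X₁) = 0 in 𝔽_p[x₂,x₄,x₆]. -/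
open MvPolynomial

noncomputable section

-- Euler identity for weighted homogeneous polynomials with weights (4,6)
lemma mono_euler {R : Type*} [CommRing R] (m : Fin 2 →₀ ℕ) (a : R) :
    C 4 * X 0 * pderiv 0 (monomial m a) + C 6 * X 1 * pderiv 1 (monomial m a)
      = C ((4 * m 0 + 6 * m 1 : ℕ) : R) * monomial m a := by
  rw [pderiv_monomial, pderiv_monomial]
  have key : ∀ i : Fin 2, (X i : MvPolynomial (Fin 2) R) *
      monomial (m - Finsupp.single i 1) (a * m i) = monomial m (a * m i) := by
    intro i
    rcases Nat.eq_zero_or_pos (m i) with h | h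
    · simp [h]
    · rw [X, monomial_mul, one_mul, add_tsub_cancel_of_le]
      rwa [Finsupp.single_le_iff]
  rw [mul_assoc, mul_assoc, key 0, key 1, C_mul_monomial, C_mul_monomial, C_mul_monomial,
    ← map_add]
  congr 1
  push_cast
  ring

lemma euler46 {R : Type*} [CommRing R] {d : ℕ} {Q : MvPolynomial (Fin 2) R}
    (h : Q.IsWeightedHomogeneous ![4, 6] d) :
    C 4 * X 0 * pderiv 0 Q + C 6 * X 1 * pderiv 1 Q = C (d : R) * Q := by
  conv_lhs => rw [Q.as_sum]
  conv_rhs => rw [Q.as_sum]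
  simp only [map_sum, Finset.mul_sum, ← Finset.sum_add_distrib]
  refine Finset.sum_congr rfl fun m hm => ?_
  rw [mono_euler]
  congr 2
  have := h (mem_support_iff.mp hm)
  rw [← this, Finsupp.weight_apply, Finsupp.sum_fintype]
  · simp [Fin.sum_univ_two, mul_comm]
  · intro; simp


/-- if `∂X₁ = X₂` and `∂X₂ = −x₄X₁` for weighted-homogeneous
`X₁, X₂ ∈ 𝔽_p[x₄,x₆]` of degrees `≡ −1` and `≡ 1 (mod p)`, then `R(X₂ − x₂X₁) = 0`. -/
theorem stmt9 (p : ℕ) [Fact p.Prime] (hp5 : 5 ≤ p)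
    (X₁ X₂ : MvPolynomial (Fin 2) (ZMod p)) (d₁ d₂ : ℕ)
    (h1 : MvPolynomial.IsWeightedHomogeneous ![4, 6] X₁ d₁)
    (h2 : MvPolynomial.IsWeightedHomogeneous ![4, 6] X₂ d₂)
    (hd1 : (d₁ : ZMod p) = -1) (hd2 : (d₂ : ZMod p) = 1)
    (hX1 : serreD X₁ = X₂) (hX2 : serreD X₂ = -(X 0 * X₁)) :
    Rvf ((6 : ZMod p)⁻¹)
        (rename (![1, 2] : Fin 2 → Fin 3) X₂ - X 0 * rename (![1, 2] : Fin 2 → Fin 3) X₁)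
      = 0 := by
  have hp := (Fact.out : p.Prime)
  have h6 : (6 : ZMod p) ≠ 0 := by
    have : ¬ ((6:ℕ) : ZMod p) = 0 := by
      rw [ZMod.natCast_eq_zero_iff]
      intro h
      have h2 := Nat.le_of_dvd (by norm_num) h
      interval_cases p <;> first | (revert h; decide) | exact absurd hp (by decide)
    exact_mod_cast this
  have hu : (6 : ZMod p) * (6 : ZMod p)⁻¹ = 1 := mul_inv_cancel₀ h6
  set f : Fin 2 → Fin 3 := ![1, 2] with hf
  have hinj : Function.Injective f := by decide
  set A := rename f X₂ with hA
  set B := rename f X₁ with hB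
  have hvars : ∀ Q : MvPolynomial (Fin 2) (ZMod p), pderiv 0 (rename f Q) = 0 := by
    intro Q
    apply pderiv_eq_zero_of_notMem_vars
    intro h
    obtain ⟨i, -, hi⟩ := Finset.mem_image.mp (vars_rename f Q h)
    fin_cases i <;> simp [f] at hi
  have r0 : ∀ Q : MvPolynomial (Fin 2) (ZMod p),
      rename f (pderiv 0 Q) = pderiv 1 (rename f Q) := by
    intro Q; rw [← pderiv_rename hinj 0 Q]; norm_num [f]
  have r1 : ∀ Q : MvPolynomial (Fin 2) (ZMod p),
      rename f (pderiv 1 Q) = pderiv 2 (rename f Q) := by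
    intro Q; rw [← pderiv_rename hinj 1 Q]; norm_num [f]
  have eA : 4 * X 1 * pderiv 1 A + 6 * X 2 * pderiv 2 A = A := by
    have h := congrArg (rename f) (euler46 h2)
    simp only [map_add, map_mul, rename_C, rename_X, map_ofNat, r0, r1, hd2, map_one, one_mul,
      ← hA] at h
    convert h using 2 <;> norm_num [f]
  have eB : 4 * X 1 * pderiv 1 B + 6 * X 2 * pderiv 2 B = -B := by
    have h := congrArg (rename f) (euler46 h1)
    simp only [map_add, map_mul, rename_C, rename_X, map_ofNat, r0, r1, hd1, map_neg, map_one,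
      neg_mul, one_mul, ← hB] at h
    convert h using 2 <;> norm_num [f]
  have sA : -(4 * X 2 * pderiv 1 A) - 6 * X 1 ^ 2 * pderiv 2 A = -(X 1 * B) := by
    have h := congrArg (rename f) hX2
    simp only [serreD, map_sub, map_neg, map_mul, map_pow, rename_C, rename_X, map_ofNat,
      r0, r1, ← hA, ← hB] at h
    convert h using 2 <;> norm_num [f] <;> rfl
  have sB : -(4 * X 2 * pderiv 1 B) - 6 * X 1 ^ 2 * pderiv 2 B = A := by
    have h := congrArg (rename f) hX1
    simp only [serreD, map_sub, map_neg, map_mul, map_pow, rename_C, rename_X, map_ofNat,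
      r0, r1, ← hA, ← hB] at h
    convert h using 2 <;> norm_num [f]
  have hC : (6 : MvPolynomial (Fin 3) (ZMod p)) * C ((6 : ZMod p)⁻¹) = 1 := by
    have := congrArg (C (σ := Fin 3)) hu
    rwa [map_mul, map_ofNat, map_one] at this
  set K : MvPolynomial (Fin 3) (ZMod p) := C ((6 : ZMod p)⁻¹) with hK
  rw [Rvf]
  simp only [map_sub, pderiv_mul, pderiv_X_self, hvars, map_mul, ← hK, map_ofNat,
    show pderiv 0 A = 0 from hvars X₂, show pderiv 0 B = 0 from hvars X₁]
  rw [show pderiv 1 (X 0 : MvPolynomial (Fin 3) (ZMod p)) = 0 from pderiv_X_of_ne (by decide),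
    show pderiv 2 (X 0 : MvPolynomial (Fin 3) (ZMod p)) = 0 from pderiv_X_of_ne (by decide)]
  linear_combination (3 * K ^ 2 * X 0) * eA + (3 * K ^ 2) * sA - (3 * K ^ 2 * X 0 ^ 2) * eB
    - (3 * K ^ 2 * X 0) * sB
    - (2 * K * (X 0 * X 1 - X 2) * (pderiv 1 A - X 0 * pderiv 1 B)
        + 3 * K * (X 0 * X 2 - X 1 ^ 2) * (pderiv 2 A - X 0 * pderiv 2 B)) * hC
end
end

section
/- For every prime p ≥ 5, the polynomial x₄³ − x₆² divides neither Ã nor B̃ in 𝔽_p[x₄,x₆]. -/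
open MvPolynomial

noncomputable section

/-- `rred` is the rational cast into `ZMod p`. -/
lemma rred_eq_cast (p : ℕ) [Fact p.Prime] (r : ℚ) : rred p r = (r : ZMod p) := by
  rw [Rat.cast_def, div_eq_mul_inv, rred]

lemma rred_sum {ι : Type*} (p : ℕ) [Fact p.Prime] (s : Finset ι) (f : ι → ℚ)
    (h : ∀ i ∈ s, ¬ p ∣ (f i).den) :
    ¬ p ∣ (∑ i ∈ s, f i).den ∧ rred p (∑ i ∈ s, f i) = ∑ i ∈ s, rred p (f i) := by
  classical
  induction s using Finset.cons_induction with
  | empty =>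
    refine ⟨?_, by simp [rred_eq_cast]⟩
    intro hd
    rw [Finset.sum_empty] at hd
    have : p = 1 := Nat.dvd_one.1 (by simpa using hd)
    exact (Nat.Prime.one_lt (Fact.out : p.Prime)).ne' this
  | cons a s ha ih =>
    have hfa : ¬ p ∣ (f a).den := h a (Finset.mem_cons_self a s)
    obtain ⟨hden, hsum⟩ := ih (fun i hi => h i (Finset.mem_cons_of_mem hi))
    have hdvd : (f a + ∑ i ∈ s, f i).den ∣ (f a).den * (∑ i ∈ s, f i).den :=
      Rat.add_den_dvd _ _
    have hpp : (Fact.out : p.Prime) = (Fact.out : p.Prime) := rfl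
    have hnd : ¬ p ∣ (f a + ∑ i ∈ s, f i).den := by
      intro hd
      rcases (Nat.Prime.dvd_mul (Fact.out : p.Prime)).1 (hd.trans hdvd) with h1 | h1
      · exact hfa h1
      · exact hden h1
    have hca : ((f a).den : ZMod p) ≠ 0 := by
      rw [Ne, ZMod.natCast_eq_zero_iff]; exact hfa
    have hcs : (((∑ i ∈ s, f i).den : ℕ) : ZMod p) ≠ 0 := by
      rw [Ne, ZMod.natCast_eq_zero_iff]; exact hden
    refine ⟨by rw [Finset.sum_cons]; exact hnd, ?_⟩
    rw [Finset.sum_cons, Finset.sum_cons, rred_eq_cast,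
      Rat.cast_add_of_ne_zero hca hcs, ← hsum, rred_eq_cast, rred_eq_cast]

lemma eval_one_eq_one (p : ℕ) [Fact p.Prime]
    (A : MvPolynomial (Fin 2) ℚ)
    (hAint : ∀ m, ¬ p ∣ (A.coeff m).den)
    (ν : ℕ)
    (hAE : MvPolynomial.aeval ![Eis 4, Eis 6] A = Eis ν)
    (At : MvPolynomial (Fin 2) (ZMod p))
    (hAt : ∀ m, At.coeff m = rred p (A.coeff m)) :
    MvPolynomial.eval (fun _ => (1 : ZMod p)) At = 1 := by
  classical
  -- constant coefficient of `Eis ν` is 1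
  have hconst : ∀ μ : ℕ, PowerSeries.constantCoeff (R := ℚ) (Eis μ) = 1 := by
    intro μ
    rw [Eis, PowerSeries.constantCoeff_mk]; simp
  -- apply constantCoeff to hAE
  have hQ : MvPolynomial.eval (fun _ => (1 : ℚ)) A = 1 := by
    have h1 := congrArg (PowerSeries.constantCoeff (R := ℚ)) hAE
    rw [MvPolynomial.aeval_def, MvPolynomial.eval₂_comp_left
      (PowerSeries.constantCoeff (R := ℚ)) (algebraMap ℚ (PowerSeries ℚ)) _ A, hconst] at h1
    have hhom : (PowerSeries.constantCoeff (R := ℚ)).comp (algebraMap ℚ (PowerSeries ℚ))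
        = RingHom.id ℚ := Subsingleton.elim _ _
    have hfun : ((PowerSeries.constantCoeff (R := ℚ)) ∘ ![Eis 4, Eis 6]) = fun _ => (1 : ℚ) := by
      funext i
      fin_cases i <;> simp [hconst]
    rw [hhom, hfun, MvPolynomial.eval₂_id] at h1
    exact h1
  -- eval of A at (1,1) equals sum of coefficients
  have hA1 : ∑ m ∈ A.support, A.coeff m = 1 := by
    have := MvPolynomial.eval_eq (fun _ => (1 : ℚ)) A
    simpa [this] using hQ
  -- support of At is contained in support of A
  have hsub : At.support ⊆ A.support := by
    intro m hm
    rw [MvPolynomial.mem_support_iff] at hm ⊢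
    intro h0
    apply hm
    rw [hAt m, h0, rred]
    simp
  have hev : MvPolynomial.eval (fun _ => (1 : ZMod p)) At
      = ∑ m ∈ A.support, At.coeff m := by
    rw [MvPolynomial.eval_eq]
    simp only [one_pow, Finset.prod_const_one, mul_one]
    exact Finset.sum_subset hsub (fun m _ hm => by
      simpa using (MvPolynomial.notMem_support_iff.1 hm))
  rw [hev]
  have := (rred_sum p A.support A.coeff (fun m _ => hAint m)).2
  calc ∑ m ∈ A.support, At.coeff m = ∑ m ∈ A.support, rred p (A.coeff m) := by
        exact Finset.sum_congr rfl (fun m _ => hAt m)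
    _ = rred p (∑ m ∈ A.support, A.coeff m) := this.symm
    _ = rred p 1 := by rw [hA1]
    _ = 1 := by rw [rred_eq_cast]; norm_num

lemma not_dvd_of_eval_one (p : ℕ) [Fact p.Prime]
    (At : MvPolynomial (Fin 2) (ZMod p))
    (h1 : MvPolynomial.eval (fun _ => (1 : ZMod p)) At = 1) :
    ¬ (X 0 ^ 3 - X 1 ^ 2 : MvPolynomial (Fin 2) (ZMod p)) ∣ At := by
  rintro ⟨C, hC⟩
  have := congrArg (MvPolynomial.eval (fun _ => (1 : ZMod p))) hC
  rw [h1] at this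
  simp at this

/-- x₄³ − x₆² divides neither Ã nor B̃. -/
theorem stmt12 (p : ℕ) [Fact p.Prime] (hp5 : 5 ≤ p)
    (A B : MvPolynomial (Fin 2) ℚ)
    (hAhom : MvPolynomial.IsWeightedHomogeneous ![4, 6] A (p - 1))
    (hBhom : MvPolynomial.IsWeightedHomogeneous ![4, 6] B (p + 1))
    (hAint : ∀ m, ¬ p ∣ (A.coeff m).den)
    (hBint : ∀ m, ¬ p ∣ (B.coeff m).den)
    (hAE : MvPolynomial.aeval ![Eis 4, Eis 6] A = Eis (p - 1))
    (hBE : MvPolynomial.aeval ![Eis 4, Eis 6] B = Eis (p + 1))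
    (At Bt : MvPolynomial (Fin 2) (ZMod p))
    (hAt : ∀ m, At.coeff m = rred p (A.coeff m))
    (hBt : ∀ m, Bt.coeff m = rred p (B.coeff m))
    :
    ¬ (X 0 ^ 3 - X 1 ^ 2 : MvPolynomial (Fin 2) (ZMod p)) ∣ At ∧
    ¬ (X 0 ^ 3 - X 1 ^ 2 : MvPolynomial (Fin 2) (ZMod p)) ∣ Bt := by
  exact ⟨not_dvd_of_eval_one p At (eval_one_eq_one p A hAint _ hAE At hAt),
    not_dvd_of_eval_one p Bt (eval_one_eq_one p B hBint _ hBE Bt hBt)⟩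
end
end

section
/- Let S be a commutative ring in which 6 is invertible and let L := S[x₂,x₄,x₆][(x₄³ − x₆²)^{-1}] be the localization at the powers of x₄³ − x₆². The derivations R, F, H extend uniquely to S-derivations of L, and (R, F, H) is a basis of the L-module of S-derivations of L: every S-derivation D of L can be written as D = P₁·R + P₂·F + P₃·H with P₁, P₂, P₃ ∈ L, and if P₁·R + P₂·F + P₃·H = 0 for P₁, P₂, P₃ ∈ L, then P₁ = P₂ = P₃ = 0. -/
open MvPolynomial

noncomputable section

/-- The localization `L = S[x₂,x₄,x₆][(x₄³ − x₆²)⁻¹]`. -/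
abbrev Lloc (S : Type*) [CommRing S] : Type _ :=
  Localization.Away ((X 1) ^ 3 - (X 2) ^ 2 : MvPolynomial (Fin 3) S)

section Aux
open TrivSqZeroExt
variable {S : Type*} [CommRing S]

theorem der_extend' (g : MvPolynomial (Fin 3) S) (L : Type*) [CommRing L]
    [Algebra (MvPolynomial (Fin 3) S) L]
    [Algebra S L] [IsScalarTower S (MvPolynomial (Fin 3) S) L]
    [IsLocalization.Away g L]
    (D₁ : Derivation S (MvPolynomial (Fin 3) S) L) :
    ∃ D : Derivation S L L, ∀ f, D (algebraMap _ L f) = D₁ f := by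
  set alg := algebraMap (MvPolynomial (Fin 3) S) L with halg
  let φ : MvPolynomial (Fin 3) S →+* DualNumber L :=
    { toFun := fun f => inl (alg f) + inr (D₁ f)
      map_one' := by simp
      map_mul' := fun f h => by
        refine TrivSqZeroExt.ext (by simp) ?_
        simp only [snd_mul, snd_add, snd_inl, snd_inr, fst_add, fst_inl, fst_inr,
          Derivation.leibniz, op_smul_eq_smul, smul_eq_mul, Algebra.smul_def, map_mul,
          add_zero, zero_add, smul_add]
        try ring
      map_zero' := by simp
      map_add' := fun f h => by simp only [map_add, inl_add, inr_add]; abel }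
  have hg : IsUnit (φ g) := by
    rw [TrivSqZeroExt.isUnit_iff_isUnit_fst]
    simpa [φ] using IsLocalization.Away.algebraMap_isUnit (S := L) g
  let τ : L →+* DualNumber L := IsLocalization.Away.lift g hg
  have hτ : ∀ f, τ (alg f) = φ f := fun f => IsLocalization.Away.lift_eq g hg f
  have hfst : ∀ x : L, (τ x).fst = x := by
    have : ((TrivSqZeroExt.fstHom L L L).toRingHom.comp τ) = RingHom.id L := by
      refine IsLocalization.ringHom_ext (Submonoid.powers g) (RingHom.ext fun f => ?_)
      simp only [RingHom.comp_apply, RingHom.id_apply]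
      rw [hτ]
      simp [φ]
      rfl
    exact fun x => congrArg (fun ψ : L →+* L => ψ x) this
  refine ⟨{ toFun := fun x => (τ x).snd
            map_add' := fun x y => by simp
            map_smul' := fun s x => ?_
            map_one_eq_zero' := by simp
            leibniz' := fun x y => ?_ }, fun f => by
              show (τ (alg f)).snd = D₁ f
              rw [hτ]; simp [φ]⟩
  · have h1 : s • x = alg (C s) * x := by
      rw [Algebra.smul_def, IsScalarTower.algebraMap_apply S (MvPolynomial (Fin 3) S) L,
        MvPolynomial.algebraMap_eq]
    show (τ (s • x)).snd = s • (τ x).snd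
    rw [h1, map_mul, TrivSqZeroExt.snd_mul, hτ]
    have hC : D₁ (C s) = 0 := MvPolynomial.derivation_C _ _
    simp only [φ, RingHom.coe_mk, MonoidHom.coe_mk, OneHom.coe_mk, hC, inr_zero, add_zero,
      fst_inl, snd_inl, op_smul_eq_smul, smul_zero]
    rw [← MvPolynomial.algebraMap_eq, ← IsScalarTower.algebraMap_apply S (MvPolynomial (Fin 3) S) L,
      algebraMap_smul]
  · show (τ (x * y)).snd = x • (τ y).snd + y • (τ x).snd
    rw [map_mul, TrivSqZeroExt.snd_mul, hfst, hfst, op_smul_eq_smul]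

theorem der_ext' (g : MvPolynomial (Fin 3) S) (L : Type*) [CommRing L]
    [Algebra (MvPolynomial (Fin 3) S) L]
    [Algebra S L] [IsScalarTower S (MvPolynomial (Fin 3) S) L]
    [IsLocalization.Away g L]
    (D₁ D₂ : Derivation S L L)
    (h : ∀ i : Fin 3, D₁ (algebraMap (MvPolynomial (Fin 3) S) L (X i))
        = D₂ (algebraMap (MvPolynomial (Fin 3) S) L (X i))) : D₁ = D₂ := by
  set alg := algebraMap (MvPolynomial (Fin 3) S) L with halg
  have hA : ∀ f : MvPolynomial (Fin 3) S, D₁ (alg f) = D₂ (alg f) := by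
    have hres : Derivation.compAlgebraMap (R := S) (MvPolynomial (Fin 3) S) D₁
        = Derivation.compAlgebraMap (MvPolynomial (Fin 3) S) D₂ :=
      MvPolynomial.derivation_ext fun i => by simpa using h i
    intro f
    simpa using DFunLike.congr_fun hres f
  ext x
  obtain ⟨⟨f, s⟩, hx⟩ := IsLocalization.surj (M := Submonoid.powers g) x
  have hs : IsUnit (alg (s : MvPolynomial (Fin 3) S)) := IsLocalization.map_units L s
  have e : D₁ (x * alg (s : MvPolynomial (Fin 3) S))
      = D₂ (x * alg (s : MvPolynomial (Fin 3) S)) := by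
    rw [hx]; exact hA f
  rw [Derivation.leibniz, Derivation.leibniz, hA] at e
  have e2 := add_left_cancel e
  exact hs.mul_left_cancel (by simpa [smul_eq_mul] using e2)

end Aux

set_option maxHeartbeats 1000000 in
/-- `R, F, H` extend uniquely to `S`-derivations of
`L = S[x₂,x₄,x₆][(x₄³−x₆²)⁻¹]` and form a basis of the `L`-module of `S`-derivations
of `L`. -/
theorem stmt13 (S : Type*) [CommRing S] (u : S) (hu : 6 * u = 1) :
    (∃! R' : Derivation S (Lloc S) (Lloc S),
        ∀ f : MvPolynomial (Fin 3) S,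
          R' (algebraMap (MvPolynomial (Fin 3) S) (Lloc S) f) =
            algebraMap (MvPolynomial (Fin 3) S) (Lloc S) (Rvf u f)) ∧
    (∃! F' : Derivation S (Lloc S) (Lloc S),
        ∀ f : MvPolynomial (Fin 3) S,
          F' (algebraMap (MvPolynomial (Fin 3) S) (Lloc S) f) =
            algebraMap (MvPolynomial (Fin 3) S) (Lloc S) (Fvf f)) ∧
    (∃! H' : Derivation S (Lloc S) (Lloc S),
        ∀ f : MvPolynomial (Fin 3) S,
          H' (algebraMap (MvPolynomial (Fin 3) S) (Lloc S) f) =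
            algebraMap (MvPolynomial (Fin 3) S) (Lloc S) (Hvf f)) ∧
    ∀ R' F' H' : Derivation S (Lloc S) (Lloc S),
      (∀ f : MvPolynomial (Fin 3) S,
          R' (algebraMap (MvPolynomial (Fin 3) S) (Lloc S) f) =
            algebraMap (MvPolynomial (Fin 3) S) (Lloc S) (Rvf u f)) →
      (∀ f : MvPolynomial (Fin 3) S,
          F' (algebraMap (MvPolynomial (Fin 3) S) (Lloc S) f) =
            algebraMap (MvPolynomial (Fin 3) S) (Lloc S) (Fvf f)) →
      (∀ f : MvPolynomial (Fin 3) S,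
          H' (algebraMap (MvPolynomial (Fin 3) S) (Lloc S) f) =
            algebraMap (MvPolynomial (Fin 3) S) (Lloc S) (Hvf f)) →
      (∀ D : Derivation S (Lloc S) (Lloc S), ∃ P₁ P₂ P₃ : Lloc S,
          ∀ x : Lloc S, D x = P₁ * R' x + P₂ * F' x + P₃ * H' x) ∧
      (∀ P₁ P₂ P₃ : Lloc S,
          (∀ x : Lloc S, P₁ * R' x + P₂ * F' x + P₃ * H' x = 0) →
          P₁ = 0 ∧ P₂ = 0 ∧ P₃ = 0) := by
  set alg := algebraMap (MvPolynomial (Fin 3) S) (Lloc S) with halg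
  -- value lemmas for the vector fields at the variables
  have pR0 : Rvf u (X 0 : MvPolynomial (Fin 3) S) = C (3*u*u) * (X 0 ^ 2 - X 1) := by
    simp [Rvf, pderiv_X_self, pderiv_X_of_ne]
  have pR1 : Rvf u (X 1 : MvPolynomial (Fin 3) S) = C (2*u) * (X 0 * X 1 - X 2) := by
    simp [Rvf, pderiv_X_self, pderiv_X_of_ne]
  have pR2 : Rvf u (X 2 : MvPolynomial (Fin 3) S) = C (3*u) * (X 0 * X 2 - X 1 ^ 2) := by
    simp [Rvf, pderiv_X_self, pderiv_X_of_ne]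
  have pF0 : Fvf (X 0 : MvPolynomial (Fin 3) S) = -12 := by simp [Fvf, pderiv_X_self]
  have pF1 : Fvf (X 1 : MvPolynomial (Fin 3) S) = 0 := by simp [Fvf, pderiv_X_of_ne]
  have pF2 : Fvf (X 2 : MvPolynomial (Fin 3) S) = 0 := by simp [Fvf, pderiv_X_of_ne]
  have pH0 : Hvf (X 0 : MvPolynomial (Fin 3) S) = C 2 * X 0 := by
    simp [Hvf, pderiv_X_self, pderiv_X_of_ne]
  have pH1 : Hvf (X 1 : MvPolynomial (Fin 3) S) = C 4 * X 1 := by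
    simp [Hvf, pderiv_X_self, pderiv_X_of_ne]
  have pH2 : Hvf (X 2 : MvPolynomial (Fin 3) S) = C 6 * X 2 := by
    simp [Hvf, pderiv_X_self, pderiv_X_of_ne]
  -- existence & uniqueness of the three extensions
  have mkex : ∀ V : MvPolynomial (Fin 3) S → MvPolynomial (Fin 3) S,
      ∀ DV : Derivation S (MvPolynomial (Fin 3) S) (MvPolynomial (Fin 3) S),
      (∀ f, DV f = V f) →
      ∃! D : Derivation S (Lloc S) (Lloc S), ∀ f, D (alg f) = alg (V f) := by
    intro V DV hDV
    obtain ⟨D, hD⟩ := der_extend' ((X 1) ^ 3 - (X 2) ^ 2) (Lloc S)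
      ((Algebra.linearMap (MvPolynomial (Fin 3) S) (Lloc S)).compDer DV)
    have hD' : ∀ f, D (alg f) = alg (V f) := by
      intro f
      rw [hD f]
      show alg (DV f) = alg (V f)
      rw [hDV]
    exact ⟨D, hD', fun Y hY => der_ext' ((X 1) ^ 3 - (X 2) ^ 2) (Lloc S) Y D fun i => by rw [hY, hD']⟩
  let DR : Derivation S (MvPolynomial (Fin 3) S) (MvPolynomial (Fin 3) S) :=
    (C (3*u*u) * (X 0 ^ 2 - X 1) : MvPolynomial (Fin 3) S) • pderiv 0
      + (C (2*u) * (X 0 * X 1 - X 2) : MvPolynomial (Fin 3) S) • pderiv 1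
      + (C (3*u) * (X 0 * X 2 - X 1 ^ 2) : MvPolynomial (Fin 3) S) • pderiv 2
  have hDR : ∀ f, DR f = Rvf u f := fun f => rfl
  have hex1 : ∃! D : Derivation S (Lloc S) (Lloc S), ∀ f, D (alg f) = alg (Rvf u f) :=
    mkex (Rvf u) DR hDR
  let DF : Derivation S (MvPolynomial (Fin 3) S) (MvPolynomial (Fin 3) S) :=
    (-12 : MvPolynomial (Fin 3) S) • pderiv 0
  have hDF : ∀ f, DF f = Fvf f := fun f => rfl
  have hex2 : ∃! D : Derivation S (Lloc S) (Lloc S), ∀ f, D (alg f) = alg (Fvf f) :=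
    mkex Fvf DF hDF
  let DH : Derivation S (MvPolynomial (Fin 3) S) (MvPolynomial (Fin 3) S) :=
    (C 2 * X 0 : MvPolynomial (Fin 3) S) • pderiv 0
      + (C 4 * X 1 : MvPolynomial (Fin 3) S) • pderiv 1
      + (C 6 * X 2 : MvPolynomial (Fin 3) S) • pderiv 2
  have hDH : ∀ f, DH f = Hvf f := fun f => rfl
  have hex3 : ∃! D : Derivation S (Lloc S) (Lloc S), ∀ f, D (alg f) = alg (Hvf f) :=
    mkex Hvf DH hDH
  refine ⟨hex1, hex2, hex3, ?_⟩
  intro R' F' H' hR hF hH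
  -- values of the three derivations at the variables, in L
  have vF0 : F' (alg (X 0)) = -12 := by rw [hF, pF0, map_neg, map_ofNat]
  have vF1 : F' (alg (X 1)) = 0 := by rw [hF, pF1, map_zero]
  have vF2 : F' (alg (X 2)) = 0 := by rw [hF, pF2, map_zero]
  have vH0 : H' (alg (X 0)) = 2 * alg (X 0) := by
    rw [hH, pH0, map_mul, show (C 2 : MvPolynomial (Fin 3) S) = 2 from map_ofNat _ 2, map_ofNat]
  have vH1 : H' (alg (X 1)) = 4 * alg (X 1) := by
    rw [hH, pH1, map_mul, show (C 4 : MvPolynomial (Fin 3) S) = 4 from map_ofNat _ 4, map_ofNat]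
  have vH2 : H' (alg (X 2)) = 6 * alg (X 2) := by
    rw [hH, pH2, map_mul, show (C 6 : MvPolynomial (Fin 3) S) = 6 from map_ofNat _ 6, map_ofNat]
  -- units
  set G : Lloc S := alg ((X 1) ^ 3 - (X 2) ^ 2) with hGdef
  have hGx : G = alg (X 1) ^ 3 - alg (X 2) ^ 2 := by rw [hGdef, map_sub, map_pow, map_pow]
  have hδ : IsUnit G :=
    IsLocalization.Away.algebraMap_isUnit (S := Lloc S) ((X 1) ^ 3 - (X 2) ^ 2)
  obtain ⟨d, hd⟩ := hδ.exists_right_inv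
  set w : Lloc S := alg (C (3*u)) with hwdef
  have hw : 2 * w = 1 := by
    have h1 : (2 : MvPolynomial (Fin 3) S) * C (3*u) = 1 := by
      rw [← map_ofNat (C : S →+* MvPolynomial (Fin 3) S) 2, ← C_mul,
        show (2 : S) * (3*u) = 6*u from by ring, hu, C_1]
    rw [hwdef, ← map_ofNat alg 2, ← map_mul, h1, map_one]
  set t : Lloc S := alg (C (3*(u*u))) with htdef
  have ht : 12 * t = 1 := by
    have h1 : (12 : MvPolynomial (Fin 3) S) * C (3*(u*u)) = 1 := by
      rw [← map_ofNat (C : S →+* MvPolynomial (Fin 3) S) 12, ← C_mul,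
        show (12 : S) * (3*(u*u)) = (6*u)*(6*u) from by ring, hu, mul_one, C_1]
    rw [htdef, ← map_ofNat alg 12, ← map_mul, h1, map_one]
  -- determinant identity
  have hC6 : (6 : MvPolynomial (Fin 3) S) * C u = 1 := by
    rw [← map_ofNat (C : S →+* MvPolynomial (Fin 3) S) 6, ← C_mul, hu, C_1]
  have pkey : Rvf u (X 1) * ((6 : MvPolynomial (Fin 3) S) * X 2)
      - Rvf u (X 2) * ((4 : MvPolynomial (Fin 3) S) * X 1)
      = 2 * ((X 1 : MvPolynomial (Fin 3) S) ^ 3 - (X 2) ^ 2) := by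
    rw [pR1, pR2]
    simp only [C_mul, map_ofNat]
    linear_combination (2 * ((X 1 : MvPolynomial (Fin 3) S) ^ 3 - (X 2) ^ 2)) * hC6
  have key : R' (alg (X 1)) * (6 * alg (X 2)) - R' (alg (X 2)) * (4 * alg (X 1)) = 2 * G := by
    rw [hR, hR]
    have h2 := congrArg alg pkey
    simp only [map_sub, map_mul, map_pow, map_ofNat] at h2
    linear_combination h2 - 2 * hGx
  refine ⟨fun D => ?_, fun P₁ P₂ P₃ h0 => ?_⟩
  · -- existence of the decomposition
    set P₁ : Lloc S :=
      w * d * (6 * alg (X 2) * D (alg (X 1)) - 4 * alg (X 1) * D (alg (X 2))) with hP₁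
    set P₃ : Lloc S :=
      w * d * (R' (alg (X 1)) * D (alg (X 2)) - R' (alg (X 2)) * D (alg (X 1))) with hP₃
    set P₂ : Lloc S :=
      t * (P₁ * R' (alg (X 0)) + P₃ * (2 * alg (X 0)) - D (alg (X 0))) with hP₂
    have eq0 : D (alg (X 0))
        = P₁ * R' (alg (X 0)) + P₂ * F' (alg (X 0)) + P₃ * H' (alg (X 0)) := by
      rw [vF0, vH0]
      linear_combination 12 * hP₂
        + (P₁ * R' (alg (X 0)) + 2 * alg (X 0) * P₃ - D (alg (X 0))) * ht
    have eq1 : D (alg (X 1))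
        = P₁ * R' (alg (X 1)) + P₂ * F' (alg (X 1)) + P₃ * H' (alg (X 1)) := by
      rw [vF1, vH1]
      linear_combination (-(R' (alg (X 1)))) * hP₁ - (4 * alg (X 1)) * hP₃
        + (-(w * d * D (alg (X 1)))) * key - (2 * w * D (alg (X 1))) * hd
        - (D (alg (X 1))) * hw
    have eq2 : D (alg (X 2))
        = P₁ * R' (alg (X 2)) + P₂ * F' (alg (X 2)) + P₃ * H' (alg (X 2)) := by
      rw [vF2, vH2]
      linear_combination (-(R' (alg (X 2)))) * hP₁ - (6 * alg (X 2)) * hP₃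
        + (-(w * d * D (alg (X 2)))) * key - (2 * w * D (alg (X 2))) * hd
        - (D (alg (X 2))) * hw
    have hEq : D = P₁ • R' + P₂ • F' + P₃ • H' := by
      refine der_ext' ((X 1) ^ 3 - (X 2) ^ 2) (Lloc S) _ _ (fun i => ?_)
      rw [Derivation.add_apply, Derivation.add_apply, Derivation.smul_apply,
        Derivation.smul_apply, Derivation.smul_apply, smul_eq_mul, smul_eq_mul, smul_eq_mul]
      fin_cases i
      · exact eq0
      · exact eq1
      · exact eq2
    refine ⟨P₁, P₂, P₃, fun x => ?_⟩
    rw [hEq, Derivation.add_apply, Derivation.add_apply, Derivation.smul_apply,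
      Derivation.smul_apply, Derivation.smul_apply, smul_eq_mul, smul_eq_mul, smul_eq_mul]
  · -- linear independence
    have e0 := h0 (alg (X 0)); rw [vF0, vH0] at e0
    have e1 := h0 (alg (X 1)); rw [vF1, vH1] at e1
    have e2 := h0 (alg (X 2)); rw [vF2, vH2] at e2
    have hQ1' : P₁ * (2 * G) = 0 := by
      linear_combination (6 * alg (X 2)) * e1 - (4 * alg (X 1)) * e2 - P₁ * key
    have hQ1 : P₁ = 0 := by
      linear_combination (w * d) * hQ1' - (2 * w * P₁) * hd - P₁ * hw
    have hQ3' : P₃ * (12 * G) = 0 := by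
      linear_combination (3 * alg (X 1) ^ 2) * e1 - (2 * alg (X 2)) * e2 + (12 * P₃) * hGx
        - (3 * alg (X 1) ^ 2 * R' (alg (X 1)) - 2 * alg (X 2) * R' (alg (X 2))) * hQ1
    have hQ3 : P₃ = 0 := by
      linear_combination (t * d) * hQ3' - (12 * t * P₃) * hd - P₃ * ht
    have hQ2 : P₂ = 0 := by
      linear_combination (-t) * e0 + (t * R' (alg (X 0))) * hQ1 + (2 * t * alg (X 0)) * hQ3
        - P₂ * ht
    exact ⟨hQ1, hQ2, hQ3⟩
end
end

section
/- Let S be a commutative ring in which 6 is invertible. As S-derivations of S[x₂,x₄,x₆], the commutators ⁅D₁,D₂⁆ := D₁∘D₂ − D₂∘D₁ satisfy ⁅R,F⁆ = H, ⁅H,F⁆ = −2F, and ⁅H,R⁆ = 2R; i.e., (R, F, H) forms an sl₂-triple. -/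
open MvPolynomial

noncomputable section

lemma pderiv_comm' {S : Type*} [CommRing S] (i j : Fin 3) (f : MvPolynomial (Fin 3) S) :
    pderiv i (pderiv j f) = pderiv j (pderiv i f) := by
  induction f using MvPolynomial.induction_on with
  | C a => simp
  | add p q hp hq => simp [hp, hq]
  | mul_X p n hp =>
    simp [pderiv_mul, hp, Pi.single_apply, apply_ite (pderiv i), apply_ite (pderiv j)]; ring

/-- `(R, F, H)` is an `sl₂`-triple: `[R,F] = H`, `[H,F] = −2F`, `[H,R] = 2R`. -/
theorem stmt14 (S : Type*) [CommRing S] (u : S) (hu : 6 * u = 1) :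
    (∀ f : MvPolynomial (Fin 3) S, Rvf u (Fvf f) - Fvf (Rvf u f) = Hvf f) ∧
    (∀ f : MvPolynomial (Fin 3) S, Hvf (Fvf f) - Fvf (Hvf f) = -2 * Fvf f) ∧
    (∀ f : MvPolynomial (Fin 3) S, Hvf (Rvf u f) - Rvf u (Hvf f) = 2 * Rvf u f) := by
  
  have hC : (6 : MvPolynomial (Fin 3) S) * C u = 1 := by
    rw [← map_ofNat (C : S →+* MvPolynomial (Fin 3) S) 6, ← C_mul, hu, C_1]
  have h12 : (-12 : MvPolynomial (Fin 3) S) = C (-12) := by rw [map_neg, map_ofNat]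
  refine ⟨fun f => ?_, fun f => ?_, fun f => ?_⟩
  · simp only [Rvf, Fvf, Hvf, h12, map_add, map_sub, map_mul, map_neg, pderiv_mul, pderiv_C,
      pderiv_X, pderiv_one, map_one]
    simp [Pi.single_apply, pderiv_comm' 0 1 f, pderiv_comm' 0 2 f]
    simp only [map_ofNat]
    linear_combination (2 * X 0 * pderiv 0 f * (6 * C u + 1) + 4 * X 1 * pderiv 1 f
      + 6 * X 2 * pderiv 2 f) * hC
  · simp only [Rvf, Fvf, Hvf, h12, map_add, map_sub, map_mul, map_neg, pderiv_mul, pderiv_C,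
      pderiv_X, pderiv_one, map_one]
    simp [Pi.single_apply, pderiv_comm' 0 1 f, pderiv_comm' 0 2 f]
    simp only [map_ofNat]
    ring
  · simp only [Rvf, Fvf, Hvf, h12, map_add, map_sub, map_mul, map_neg, pderiv_mul, pderiv_C,
      pderiv_X, pderiv_one, map_one]
    simp [Pi.single_apply, pderiv_comm' 0 1 f, pderiv_comm' 0 2 f, pderiv_comm' 1 2 f]
    simp only [map_ofNat]
    ring
end
end

section
/- Let k be a field of characteristic p ≥ 5 and let R^p denote the p-fold composite R ∘ ⋯ ∘ R as a k-linear endomorphism of k[x₂,x₄,x₆]. Then F commutes with R^p, i.e., F ∘ R^p = R^p ∘ F. -/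
open MvPolynomial

noncomputable section

/-- Partial derivatives commute. -/
lemma pd_comm {σ : Type*} [DecidableEq σ] {R : Type*} [CommRing R] (i j : σ)
    (f : MvPolynomial σ R) : pderiv i (pderiv j f) = pderiv j (pderiv i f) := by
  induction f using MvPolynomial.induction_on with
  | C a => simp
  | add p q hp hq => simp [hp, hq]
  | mul_X p m ih =>
      simp only [pderiv_mul, pderiv_X, Pi.single_apply, map_add, ih,
        apply_ite (pderiv i), apply_ite (pderiv j), pderiv_one, map_zero,
        mul_ite, mul_one, mul_zero, ite_mul, one_mul, zero_mul]
      split_ifs with h1 h2 <;> simp_all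

lemma comm1 {S : Type*} [CommRing S] (u : S) (hu : 6 * u = 1) (f : MvPolynomial (Fin 3) S) :
    Fvf (Rvf u f) = Rvf u (Fvf f) - Hvf f := by
  have hC : (6 : MvPolynomial (Fin 3) S) * C u = 1 := by
    rw [← map_ofNat (C : S →+* _) 6, ← map_mul, hu, map_one]
  have h12 : (-12 : MvPolynomial (Fin 3) S) = C (-12) := by
    rw [map_neg, map_ofNat]
  simp only [Fvf, Rvf, Hvf, h12, pderiv_mul, map_add, map_sub, pderiv_X, pderiv_C, pderiv_pow,
    pd_comm 1 0 f, pd_comm 2 0 f]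
  simp only [map_mul, map_neg, map_ofNat, Pi.single_apply, eq_self_iff_true, if_true,
    if_neg (show (1:Fin 3) ≠ 0 by decide), if_neg (show (2:Fin 3) ≠ 0 by decide),
    if_neg (show (0:Fin 3) ≠ 1 by decide), if_neg (show (0:Fin 3) ≠ 2 by decide)]
  linear_combination ((-12 * C u - 2) * X 0 * pderiv 0 f - 4 * X 1 * pderiv 1 f
    - 6 * X 2 * pderiv 2 f) * hC

lemma comm2 {S : Type*} [CommRing S] (u : S) (f : MvPolynomial (Fin 3) S) :
    Hvf (Rvf u f) = Rvf u (Hvf f) + 2 • Rvf u f := by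
  simp only [Fvf, Rvf, Hvf, pderiv_mul, map_add, map_sub, pderiv_X, pderiv_C, pderiv_pow,
    pd_comm 1 0 f, pd_comm 2 0 f, pd_comm 2 1 f, smul_eq_mul]
  simp only [map_mul, map_ofNat, Pi.single_apply, eq_self_iff_true, if_true,
    if_neg (show (1:Fin 3) ≠ 0 by decide), if_neg (show (2:Fin 3) ≠ 0 by decide),
    if_neg (show (0:Fin 3) ≠ 1 by decide), if_neg (show (0:Fin 3) ≠ 2 by decide),
    if_neg (show (2:Fin 3) ≠ 1 by decide), if_neg (show (1:Fin 3) ≠ 2 by decide)]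
  ring

/-- In a ring, if `[F,R] = -H` and `[H,R] = 2R`, then a closed formula for `F R^{n+1}`. -/
lemma auxcomm {A : Type*} [Ring A] (F R H : A) (hFR : F * R = R * F - H)
    (hHR : H * R = R * H + 2 • R) (n : ℕ) :
    F * R ^ (n+1) = R^(n+1) * F - (n+1) • (R^n * H) - ((n+1)*n) • R^n := by
  induction n with
  | zero => simpa using hFR
  | succ n ih =>
      have h1 : F * R^(n+2) = (F * R^(n+1)) * R := by rw [pow_succ, ← mul_assoc]
      rw [h1, ih, sub_mul, sub_mul, smul_mul_assoc, smul_mul_assoc, mul_assoc,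
        hFR, mul_assoc (R^n), hHR]
      simp only [mul_sub, mul_add, ← mul_assoc, ← pow_succ, smul_add, mul_smul_comm, smul_smul]
      module

/-- `Rvf` as a linear endomorphism. -/
def Rlin {S : Type*} [CommRing S] (u : S) :
    Module.End S (MvPolynomial (Fin 3) S) :=
  LinearMap.mulLeft S (C (3 * u * u) * (X 0 ^ 2 - X 1)) ∘ₗ (pderiv 0).toLinearMap
    + LinearMap.mulLeft S (C (2 * u) * (X 0 * X 1 - X 2)) ∘ₗ (pderiv 1).toLinearMap
    + LinearMap.mulLeft S (C (3 * u) * (X 0 * X 2 - X 1 ^ 2)) ∘ₗ (pderiv 2).toLinearMap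

/-- `Fvf` as a linear endomorphism. -/
def Flin {S : Type*} [CommRing S] : Module.End S (MvPolynomial (Fin 3) S) :=
  LinearMap.mulLeft S (-12 : MvPolynomial (Fin 3) S) ∘ₗ (pderiv 0).toLinearMap

/-- `Hvf` as a linear endomorphism. -/
def Hlin {S : Type*} [CommRing S] : Module.End S (MvPolynomial (Fin 3) S) :=
  LinearMap.mulLeft S (C 2 * X 0) ∘ₗ (pderiv 0).toLinearMap
    + LinearMap.mulLeft S (C 4 * X 1) ∘ₗ (pderiv 1).toLinearMap
    + LinearMap.mulLeft S (C 6 * X 2) ∘ₗ (pderiv 2).toLinearMap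

lemma Rlin_apply {S : Type*} [CommRing S] (u : S) (f : MvPolynomial (Fin 3) S) :
    Rlin u f = Rvf u f := rfl

lemma Flin_apply {S : Type*} [CommRing S] (f : MvPolynomial (Fin 3) S) :
    Flin f = Fvf f := rfl

lemma Hlin_apply {S : Type*} [CommRing S] (f : MvPolynomial (Fin 3) S) :
    Hlin f = Hvf f := rfl

/-- `F` commutes with `R^p` in characteristic `p ≥ 5`. -/
theorem stmt15 (p : ℕ) [Fact p.Prime] (hp5 : 5 ≤ p)
    (k : Type*) [Field k] [CharP k p] :
    ∀ f : MvPolynomial (Fin 3) k,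
      Fvf ((Rvf ((6 : k)⁻¹))^[p] f) = (Rvf ((6 : k)⁻¹))^[p] (Fvf f) := by
  have hp : p.Prime := Fact.out
  have hpd : ¬ (p ∣ 6) := by
    intro h
    have hle := Nat.le_of_dvd (by norm_num) h
    interval_cases p
    · revert h; decide
    · exact absurd hp (by norm_num)
  have h6 : (6 : k) ≠ 0 := by
    intro heq
    exact hpd ((CharP.cast_eq_zero_iff k p 6).mp (by exact_mod_cast heq))
  set u : k := (6 : k)⁻¹ with hu
  have hu6 : (6 : k) * u = 1 := mul_inv_cancel₀ h6
  have hFR : (Flin : Module.End k (MvPolynomial (Fin 3) k)) * Rlin u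
      = Rlin u * Flin - Hlin := by
    apply LinearMap.ext; intro f
    simpa [Module.End.mul_apply, Rlin_apply, Flin_apply, Hlin_apply] using comm1 u hu6 f
  have hHR : (Hlin : Module.End k (MvPolynomial (Fin 3) k)) * Rlin u
      = Rlin u * Hlin + 2 • Rlin u := by
    apply LinearMap.ext; intro f
    simpa [Module.End.mul_apply, Rlin_apply, Hlin_apply] using comm2 u f
  have hp1 : p - 1 + 1 = p := Nat.succ_pred_eq_of_pos hp.pos
  have key := auxcomm Flin (Rlin u) Hlin hFR hHR (p - 1)
  rw [hp1] at key
  have hzero : ∀ x : Module.End k (MvPolynomial (Fin 3) k), p • x = 0 := by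
    intro x
    rw [← Nat.cast_smul_eq_nsmul k p x, CharP.cast_eq_zero k p, zero_smul]
  have key2 : (Flin : Module.End k (MvPolynomial (Fin 3) k)) * Rlin u ^ p
      = Rlin u ^ p * Flin := by
    rw [key, mul_smul, hzero, hzero]; abel
  intro f
  have hRco : Rvf u = ⇑(Rlin u) := rfl
  have h := LinearMap.ext_iff.mp key2 f
  rw [Module.End.mul_apply, Module.End.mul_apply] at h
  show Fvf ((⇑(Rlin u))^[p] f) = (⇑(Rlin u))^[p] (Fvf f)
  rw [← Module.End.pow_apply, ← Module.End.pow_apply, ← Flin_apply, ← Flin_apply]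
  exact h
end
end
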